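/- Let q ≥ 1 be an integer and γ ∈ (0,1), and set α_n := 1 − γ/n (the case β = 1). Then sup_{t ∈ [0,1]} | (q²γ²/(2 n²)) · Λ_q(n,t) − (exp(−qγt) − 1 + qγt) | → 0 as n → ∞; that is, Λ_q(n,t) = (2 n²/(q²γ²)) · (exp(−qγt) − 1 + qγt) · (1 + o(1)) uniformly in t ∈ [0,1]. -/

import Mathlib

open Finset


lemma aux_pow_sub (a b : ℝ) (h0a : 0 ≤ a) (ha : a ≤ 1) (h0b : 0 ≤ b) (hb : b ≤ 1) :
    ∀ k : ℕ, |a ^ k - b ^ k| ≤ k * |a - b| := by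
  intro k
  induction k with
  | zero => simp
  | succ k ih =>
    have h1 : a ^ (k+1) - b ^ (k+1) = a * (a ^ k - b ^ k) + (a - b) * b ^ k := by ring
    have hbk : b ^ k ≤ 1 := pow_le_one₀ h0b hb
    have hbk0 : (0:ℝ) ≤ b ^ k := pow_nonneg h0b k
    have h2 : |a * (a ^ k - b ^ k)| ≤ 1 * (k * |a - b|) := by
      rw [abs_mul]
      apply mul_le_mul (by rw [abs_of_nonneg h0a]; exact ha) ih (abs_nonneg _) zero_le_one
    have h3 : |(a - b) * b ^ k| ≤ |a - b| * 1 := by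
      rw [abs_mul]
      apply mul_le_mul_of_nonneg_left _ (abs_nonneg _)
      rw [abs_of_nonneg hbk0]; exact hbk
    calc |a ^ (k+1) - b ^ (k+1)| ≤ |a * (a ^ k - b ^ k)| + |(a - b) * b ^ k| := by
          rw [h1]; exact abs_add_le _ _
      _ ≤ 1 * (k * |a - b|) + |a - b| * 1 := add_le_add h2 h3
      _ = (k+1 : ℕ) * |a - b| := by push_cast; ring

lemma aux_pow_le (x : ℝ) (h0 : 0 ≤ x) (h1 : x ≤ 1) :
    ∀ q : ℕ, (1 - x) ^ q ≤ 1 - q * x + (q * x) ^ 2 / 2 := by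
  intro q
  induction q with
  | zero => simp
  | succ q ih =>
    have hx : (0:ℝ) ≤ 1 - x := by linarith
    have h3 : (1 - x) * (1 - x) ^ q ≤ (1 - x) * (1 - q * x + (q * x) ^ 2 / 2) :=
      mul_le_mul_of_nonneg_left ih hx
    have h2 : (1 - x) ^ (q+1) = (1 - x) * (1 - x) ^ q := by ring
    rw [h2]
    refine h3.trans ?_
    push_cast
    nlinarith [mul_nonneg (mul_nonneg (Nat.cast_nonneg q : (0:ℝ) ≤ q) h0) (sq_nonneg x),
      mul_nonneg (mul_nonneg (sq_nonneg ((q:ℝ))) h0) (sq_nonneg x), sq_nonneg x]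

lemma exp_neg_le (x : ℝ) (hx : 0 ≤ x) : Real.exp (-x) ≤ 1 - x + x ^ 2 := by
  have h1 : 1 + x ≤ Real.exp x := by linarith [Real.add_one_le_exp x]
  have h0 : (0:ℝ) < 1 + x := by linarith
  have h2 : Real.exp (-x) ≤ (1 + x)⁻¹ := by
    rw [Real.exp_neg]
    exact inv_anti₀ h0 h1
  refine h2.trans ?_
  rw [inv_le_iff_one_le_mul₀ h0]
  nlinarith [pow_nonneg hx 3]

lemma exp_neg_lip (a b : ℝ) (ha : 0 ≤ a) (hab : a ≤ b) :
    Real.exp (-a) - Real.exp (-b) ≤ b - a := by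
  have h1 : Real.exp (-a) ≤ 1 := Real.exp_le_one_iff.mpr (by linarith)
  have h2 : 1 - (b - a) ≤ Real.exp (a - b) := by linarith [Real.add_one_le_exp (a - b)]
  have h3 : Real.exp (-b) = Real.exp (-a) * Real.exp (a - b) := by
    rw [← Real.exp_add]; ring_nf
  nlinarith [Real.exp_pos (-a), Real.exp_pos (a-b)]

lemma row_sum (ρ : ℝ) (M : ℕ) :
    ∑ j ∈ Icc 1 M, ρ ^ (Nat.dist M j) = ∑ k ∈ range M, ρ ^ k := by
  have h1 : Icc 1 M = Ico 1 (M+1) := by rw [Finset.Ico_add_one_right_eq_Icc]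
  rw [h1, Finset.sum_Ico_eq_sum_range]
  simp only [Nat.add_sub_cancel]
  rw [← Finset.sum_range_reflect (fun k => ρ ^ k) M]
  apply Finset.sum_congr rfl
  intro i hi
  simp only [Finset.mem_range] at hi
  have hd : Nat.dist M (1 + i) = M - (1 + i) := Nat.dist_eq_sub_of_le_right (by omega)
  simp only [hd]
  congr 1
  omega

lemma S_closed (ρ : ℝ) (m : ℕ) :
    (∑ i ∈ Icc 1 m, ∑ j ∈ Icc 1 m, ρ ^ (Nat.dist i j)) * (1 - ρ) ^ 2
      = m * (1 - ρ ^ 2) - 2 * ρ * (1 - ρ ^ m) := by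
  induction m with
  | zero => simp
  | succ m ih =>
    have hins : Icc 1 (m+1) = insert (m+1) (Icc 1 m) := by
      rw [Finset.insert_Icc_right_eq_Icc_add_one (by omega)]
    have hnm : (m+1) ∉ Icc 1 m := by simp
    have hrow : ∑ j ∈ insert (m+1) (Icc 1 m), ρ ^ (Nat.dist (m+1) j)
        = ∑ k ∈ range (m+1), ρ ^ k := by rw [← hins]; exact row_sum ρ (m+1)
    have hG : (∑ k ∈ range (m+1), ρ ^ k) * (ρ - 1) = ρ ^ (m+1) - 1 := geom_sum_mul ρ (m+1)
    have hcol : ∑ i ∈ Icc 1 m, ρ ^ (Nat.dist i (m+1))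
        = (∑ k ∈ range (m+1), ρ ^ k) - 1 := by
      rw [← hrow, Finset.sum_insert hnm]
      simp only [Nat.dist_self, pow_zero]
      have h2 : ∀ i ∈ Icc 1 m, ρ ^ (Nat.dist i (m+1)) = ρ ^ (Nat.dist (m+1) i) := by
        intro i _; rw [Nat.dist_comm]
      rw [Finset.sum_congr rfl h2]
      ring
    have hsplit : (∑ i ∈ Icc 1 (m+1), ∑ j ∈ Icc 1 (m+1), ρ ^ (Nat.dist i j))
        = (∑ i ∈ Icc 1 m, ∑ j ∈ Icc 1 m, ρ ^ (Nat.dist i j))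
          + 2 * (∑ k ∈ range (m+1), ρ ^ k) - 1 := by
      rw [hins, Finset.sum_insert hnm, hrow]
      have h3 : ∀ i ∈ Icc 1 m, ∑ j ∈ insert (m+1) (Icc 1 m), ρ ^ (Nat.dist i j)
          = ρ ^ (Nat.dist i (m+1)) + ∑ j ∈ Icc 1 m, ρ ^ (Nat.dist i j) := by
        intro i _; rw [Finset.sum_insert hnm]
      rw [Finset.sum_congr rfl h3, Finset.sum_add_distrib, hcol]
      ring
    rw [hsplit]
    have hpow : ρ ^ (m+1) = ρ * ρ ^ m := by ring
    push_cast
    nlinarith [ih, hG, hpow]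

set_option maxHeartbeats 1000000 in
lemma est (y ρ r E w u d p : ℝ)
    (hy0 : 0 < y) (hy1 : y ≤ 1)
    (hρ0 : 0 ≤ ρ) (hρ1 : ρ ≤ 1) (hρy : 1 - y ≤ ρ)
    (hr0 : 0 ≤ r) (hr1 : r ≤ 1)
    (hrE : |r - E| ≤ d) (hd0 : 0 ≤ d)
    (hw0 : 0 ≤ w) (hwu : w ≤ u) (huw : u - w ≤ y)
    (hp1 : 1 ≤ p) (hp2 : p ≤ 1 + y) :
    |(w * p * ((1+ρ)/2) - p^2 * ρ * (1-r)) - (E - 1 + u)|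
      ≤ u*y + 4*y + d := by
  have hp0 : (0:ℝ) ≤ p := by linarith
  have hPu : p * ((1+ρ)/2) ≤ 1 + y := by nlinarith
  have hPl : 1 - y ≤ p * ((1+ρ)/2) := by nlinarith
  have hsq : 1 ≤ p^2 := by nlinarith
  have hsq2 : p^2 ≤ (1+y)^2 := by nlinarith
  have hQu : p^2 * ρ ≤ 1 + 3*y := by nlinarith
  have hQl : 1 - y ≤ p^2 * ρ := by nlinarith [mul_le_mul_of_nonneg_right hsq hρ0]
  have h1 : |w * p * ((1+ρ)/2) - u| ≤ u*y + y := by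
    have e1 : w * (p * ((1+ρ)/2)) ≤ w * (1+y) := mul_le_mul_of_nonneg_left hPu hw0
    have e2 : w * (1-y) ≤ w * (p * ((1+ρ)/2)) := mul_le_mul_of_nonneg_left hPl hw0
    have e3 : w * y ≤ u * y := mul_le_mul_of_nonneg_right hwu hy0.le
    rw [abs_le]
    constructor
    · nlinarith
    · nlinarith
  have hrE' := abs_le.1 hrE
  have h1r0 : (0:ℝ) ≤ 1 - r := by linarith
  have h2 : |p^2 * ρ * (1-r) - (1-E)| ≤ 3*y + d := by
    have e1 : (p^2*ρ - 1) * (1-r) ≤ 3*y * (1-r) :=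
      mul_le_mul_of_nonneg_right (by linarith) h1r0
    have e2 : (-y) * (1-r) ≤ (p^2*ρ - 1) * (1-r) :=
      mul_le_mul_of_nonneg_right (by linarith) h1r0
    have e3 : 3*y*(1-r) ≤ 3*y := by nlinarith
    have e4 : -y ≤ (-y) * (1-r) := by nlinarith
    have key : p^2 * ρ * (1-r) - (1-E) = (p^2*ρ - 1) * (1-r) + (E - r) := by ring
    rw [key, abs_le]
    constructor
    · linarith [hrE'.1]
    · linarith [hrE'.2]
  have key2 : (w * p * ((1+ρ)/2) - p^2 * ρ * (1-r)) - (E - 1 + u)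
      = (w * p * ((1+ρ)/2) - u) - (p^2 * ρ * (1-r) - (1-E)) := by ring
  calc |(w * p * ((1+ρ)/2) - p^2 * ρ * (1-r)) - (E - 1 + u)|
      ≤ |w * p * ((1+ρ)/2) - u| + |p^2 * ρ * (1-r) - (1-E)| := by
        rw [key2]; exact abs_sub _ _
    _ ≤ (u*y + y) + (3*y + d) := add_le_add h1 h2
    _ = u*y + 4*y + d := by ring


lemma eps_pos (y ρ : ℝ) (hy0 : 0 < y) (hy1 : y ≤ 1) (hρu : ρ ≤ 1 - y + y^2/2) :
    0 < 1 - ρ := by nlinarith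

lemma p_up (y ρ : ℝ) (hy0 : 0 < y) (hy1 : y ≤ 1) (hρu : ρ ≤ 1 - y + y^2/2) :
    y ≤ (1+y) * (1-ρ) := by nlinarith

lemma final_ineq (q γ u : ℝ) (hq1 : 1 ≤ q) (hγ0 : 0 < γ) (hγ1 : γ < 1)
    (hu0 : 0 ≤ u) (huq : u ≤ q*γ) :
    u*(q*γ) + 5*(q*γ) + q*γ^2 ≤ 7*q^2 := by
  nlinarith [mul_le_mul_of_nonneg_right huq (by positivity : (0:ℝ) ≤ q*γ),
    mul_le_mul_of_nonneg_left (sq_nonneg γ) (by positivity : (0:ℝ) ≤ q),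
    sq_nonneg (q*γ), mul_le_mul_of_nonneg_left hγ1.le hγ0.le,
    mul_le_mul_of_nonneg_left hγ1.le (by positivity : (0:ℝ) ≤ q),
    mul_le_mul_of_nonneg_left hγ1.le (by positivity : (0:ℝ) ≤ q*q),
    sq_nonneg (q*γ - q), sq_nonneg (q - 1)]


/-- `Λ_q(n,t) = ∑_{i=1}^{⌊nt⌋} ∑_{j=1}^{⌊nt⌋} α^{q|i−j|}`. -/
noncomputable def Lam (α : ℝ) (q n : ℕ) (t : ℝ) : ℝ :=
  ∑ i ∈ Finset.Icc 1 ⌊(n : ℝ) * t⌋₊, ∑ j ∈ Finset.Icc 1 ⌊(n : ℝ) * t⌋₊,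
    α ^ (q * Nat.dist i j)

set_option maxHeartbeats 1000000 in
lemma main_bound (q : ℕ) (hq : 1 ≤ q) (γ : ℝ) (hγ0 : 0 < γ) (hγ1 : γ < 1)
    (n : ℕ) (hn : (q:ℝ) * γ ≤ (n:ℝ)) (t : ℝ) (ht0 : 0 ≤ t) (ht1 : t ≤ 1) :
    |((q : ℝ) ^ 2 * γ ^ 2 / (2 * (n : ℝ) ^ 2)) * Lam (1 - γ / (n : ℝ)) q n t
      - (Real.exp (-((q : ℝ) * γ * t)) - 1 + (q : ℝ) * γ * t)| ≤ 7 * (q:ℝ)^2 / n := by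
  have hq1 : (1:ℝ) ≤ q := by exact_mod_cast hq
  have hn0 : (0:ℝ) < n := lt_of_lt_of_le (by positivity) hn
  have hn1 : (1:ℝ) ≤ n := by
    have : 0 < n := by exact_mod_cast hn0
    exact_mod_cast this
  set x := γ / (n:ℝ) with hxdef
  set y := (q:ℝ) * γ / n with hydef
  set ρ := (1 - x) ^ q with hρdef
  set p := y / (1 - ρ) with hpdef
  set m := ⌊(n:ℝ) * t⌋₊ with hmdef
  set u := (q:ℝ) * γ * t with hudef
  set w := y * (m:ℝ) with hwdef
  set r := ρ ^ m with hrdef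
  set E := Real.exp (-u) with hEdef
  set d := (q:ℝ) * γ^2 / n + y with hddef
  clear_value x y ρ p m u w r E d
  have hm0 : m = ⌊(n:ℝ) * t⌋₊ := hmdef
  have hx0 : 0 < x := by rw [hxdef]; positivity
  have hx1 : x < 1 := by rw [hxdef, div_lt_one hn0]; linarith
  have hy0 : 0 < y := by rw [hydef]; positivity
  have hy1 : y ≤ 1 := by rw [hydef, div_le_one hn0]; exact hn
  have hyn : y * n = (q:ℝ) * γ := by rw [hydef]; field_simp
  have hxy : (q:ℝ) * x = y := by rw [hxdef, hydef]; ring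
  have hρ0 : 0 ≤ ρ := hρdef ▸ pow_nonneg (by linarith) q
  have hρ1 : ρ ≤ 1 := hρdef ▸ pow_le_one₀ (by linarith) (by linarith)
  have hρy : 1 - y ≤ ρ := by
    have h := one_add_mul_le_pow (a := -x) (by linarith) q
    have h2 : 1 + (q:ℝ) * (-x) = 1 - y := by rw [← hxy]; ring
    have h3 : (1 + -x) ^ q = (1 - x) ^ q := by ring_nf
    rw [hρdef]; linarith [h2 ▸ h3 ▸ h]
  have hρu : ρ ≤ 1 - y + y^2/2 := by
    have h := aux_pow_le x hx0.le hx1.le q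
    have h2 : 1 - (q:ℝ)*x + ((q:ℝ)*x)^2/2 = 1 - y + y^2/2 := by rw [hxy]
    rw [hρdef]; linarith
  have hεpos : 0 < 1 - ρ := eps_pos y ρ hy0 hy1 hρu
  have hεy : 1 - ρ ≤ y := by linarith
  have hp1 : 1 ≤ p := by rw [hpdef, le_div_iff₀ hεpos]; linarith
  have hp2 : p ≤ 1 + y := by rw [hpdef, div_le_iff₀ hεpos]; exact p_up y ρ hy0 hy1 hρu
  have hm1 : (m:ℝ) ≤ (n:ℝ) * t := hm0 ▸ Nat.floor_le (by positivity)
  have hm2 : (n:ℝ) * t < m + 1 := hm0 ▸ Nat.lt_floor_add_one _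
  have hmn : (m:ℝ) ≤ n := by
    have := mul_le_of_le_one_right hn0.le ht1
    linarith
  have hu0 : 0 ≤ u := by rw [hudef]; positivity
  have huq : u ≤ (q:ℝ) * γ := by
    rw [hudef]
    have := mul_le_of_le_one_right (by positivity : (0:ℝ) ≤ (q:ℝ)*γ) ht1
    linarith
  have hw0 : 0 ≤ w := by rw [hwdef]; positivity
  have hwu : w ≤ u := by
    have h1 : y * (m:ℝ) ≤ y * ((n:ℝ)*t) := mul_le_mul_of_nonneg_left hm1 hy0.le
    have h2 : y * ((n:ℝ)*t) = u := by rw [hudef, ← hyn]; ring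
    rw [hwdef]; linarith
  have huw : u - w ≤ y := by
    have h1 : y * ((n:ℝ)*t) ≤ y * ((m:ℝ) + 1) := mul_le_mul_of_nonneg_left hm2.le hy0.le
    have h2 : y * ((n:ℝ)*t) = u := by rw [hudef, ← hyn]; ring
    have h3 : y*((m:ℝ)+1) = y*(m:ℝ) + y := by ring
    rw [hwdef]; linarith
  have hr0 : 0 ≤ r := hrdef ▸ pow_nonneg hρ0 m
  have hr1 : r ≤ 1 := hrdef ▸ pow_le_one₀ hρ0 hρ1
  have hE0 : 0 ≤ E := hEdef ▸ (Real.exp_pos _).le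
  have hE1 : E ≤ 1 := hEdef ▸ Real.exp_le_one_iff.mpr (by linarith)
  have hd0 : 0 ≤ d := by rw [hddef]; positivity
  have hrE : |r - E| ≤ d := by
    have hE1l : 1 - x ≤ Real.exp (-x) := by linarith [Real.add_one_le_exp (-x)]
    have hE1u : Real.exp (-x) ≤ 1 - x + x^2 := exp_neg_le x hx0.le
    have hE10 : 0 ≤ Real.exp (-x) := (Real.exp_pos _).le
    have hE11 : Real.exp (-x) ≤ 1 := Real.exp_le_one_iff.mpr (by linarith)
    have hstep1 : |(1-x)^(q*m) - (Real.exp (-x))^(q*m)|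
        ≤ (q*m : ℕ) * |(1-x) - Real.exp (-x)| :=
      aux_pow_sub (1-x) (Real.exp (-x)) (by linarith) (by linarith) hE10 hE11 (q*m)
    have habs : |(1-x) - Real.exp (-x)| ≤ x^2 := by
      rw [abs_le]; constructor
      · linarith
      · linarith [sq_nonneg x]
    have hqm : ((q*m : ℕ) : ℝ) ≤ (q:ℝ) * n := by
      push_cast
      exact mul_le_mul_of_nonneg_left hmn (by positivity)
    have hbound1 : |r - (Real.exp (-x))^(q*m)| ≤ (q:ℝ) * γ^2 / n := by
      have h1 : r = (1-x)^(q*m) := by rw [hrdef, hρdef, ← pow_mul]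
      have h2 : ((q*m:ℕ):ℝ) * |(1-x) - Real.exp (-x)| ≤ ((q:ℝ)*n) * x^2 :=
        mul_le_mul hqm habs (abs_nonneg _) (by positivity)
      have h3 : ((q:ℝ)*n) * x^2 = (q:ℝ) * γ^2 / n := by
        rw [hxdef]; field_simp
      rw [h1]
      calc |(1-x)^(q*m) - (Real.exp (-x))^(q*m)|
          ≤ (q*m : ℕ) * |(1-x) - Real.exp (-x)| := hstep1
        _ ≤ ((q:ℝ)*n) * x^2 := h2
        _ = (q:ℝ) * γ^2 / n := h3
    have hEpow : (Real.exp (-x))^(q*m) = Real.exp (-w) := by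
      rw [← Real.exp_nat_mul]
      congr 1
      rw [hwdef, ← hxy]
      push_cast
      ring
    have hbound2 : |(Real.exp (-x))^(q*m) - E| ≤ y := by
      rw [hEpow, hEdef]
      have hmono : Real.exp (-u) ≤ Real.exp (-w) := Real.exp_le_exp.2 (by linarith)
      rw [abs_of_nonneg (by linarith)]
      linarith [exp_neg_lip w u hw0 hwu]
    calc |r - E| ≤ |r - (Real.exp (-x))^(q*m)| + |(Real.exp (-x))^(q*m) - E| :=
        abs_sub_le _ _ _
      _ ≤ (q:ℝ) * γ^2 / n + y := add_le_add hbound1 hbound2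
      _ = d := hddef.symm
  have hLam : Lam (1 - γ / (n:ℝ)) q n t
      = ∑ i ∈ Icc 1 m, ∑ j ∈ Icc 1 m, ρ ^ (Nat.dist i j) := by
    unfold Lam
    rw [← hm0]
    refine Finset.sum_congr rfl fun i _ => Finset.sum_congr rfl fun j _ => ?_
    rw [hρdef, ← pow_mul, ← hxdef]
  have hSdiv : (∑ i ∈ Icc 1 m, ∑ j ∈ Icc 1 m, ρ ^ (Nat.dist i j))
      = ((m:ℝ) * (1 - ρ^2) - 2*ρ*(1 - r)) / (1-ρ)^2 := by
    rw [eq_div_iff (pow_ne_zero 2 hεpos.ne'), hrdef]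
    exact S_closed ρ m
  have hf : ((q : ℝ) ^ 2 * γ ^ 2 / (2 * (n : ℝ) ^ 2)) * Lam (1 - γ / (n : ℝ)) q n t
      = w * p * ((1+ρ)/2) - p^2 * ρ * (1-r) := by
    rw [hLam, hSdiv, hwdef, hpdef, hydef]
    field_simp
    ring
  rw [hxdef, hf]
  have hest := est y ρ r E w u d p hy0 hy1 hρ0 hρ1 hρy hr0 hr1 hrE hd0 hw0 hwu huw hp1 hp2
  refine hest.trans ?_
  have hrw : u*y + 4*y + d = (u*(y*n) + 5*(y*n) + ((q:ℝ)*γ^2/n)*n)/n := by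
    rw [hddef]; field_simp; ring
  have hdn : ((q:ℝ)*γ^2/n)*n = (q:ℝ)*γ^2 := by field_simp
  rw [hrw, hyn, hdn]
  gcongr
  exact final_ineq (q:ℝ) γ u hq1 hγ0 hγ1 hu0 huq

/-- For `β = 1` and `α_n = 1 − γ/n`,
`(q²γ²/(2n²)) Λ_q(n,t) → exp(−qγt) − 1 + qγt` uniformly in `t ∈ [0,1]`. -/
theorem stmt_5 (q : ℕ) (hq : 1 ≤ q) (γ : ℝ) (hγ : γ ∈ Set.Ioo (0:ℝ) 1) :
    TendstoUniformlyOn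
      (fun (n : ℕ) (t : ℝ) =>
        ((q : ℝ) ^ 2 * γ ^ 2 / (2 * (n : ℝ) ^ 2)) * Lam (1 - γ / (n : ℝ)) q n t)
      (fun t => Real.exp (-((q : ℝ) * γ * t)) - 1 + (q : ℝ) * γ * t)
      Filter.atTop (Set.Icc 0 1) := by
  obtain ⟨hγ0, hγ1⟩ := hγ
  rw [Metric.tendstoUniformlyOn_iff]
  intro ε hε
  rw [Filter.eventually_atTop]
  refine ⟨max (⌈(q:ℝ)*γ⌉₊) (⌊7*(q:ℝ)^2/ε⌋₊ + 1), fun n hn t ht => ?_⟩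
  have h1 : ⌈(q:ℝ)*γ⌉₊ ≤ n := le_trans (le_max_left _ _) hn
  have h2 : ⌊7*(q:ℝ)^2/ε⌋₊ + 1 ≤ n := le_trans (le_max_right _ _) hn
  have hqγn : (q:ℝ)*γ ≤ n := le_trans (Nat.le_ceil _) (by exact_mod_cast h1)
  have hn0 : (0:ℝ) < n := lt_of_lt_of_le (by positivity) hqγn
  have hcn : 7*(q:ℝ)^2/ε < n := by
    calc 7*(q:ℝ)^2/ε < ⌊7*(q:ℝ)^2/ε⌋₊ + 1 := Nat.lt_floor_add_one _
      _ ≤ n := by exact_mod_cast h2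
  have hbd := main_bound q hq γ hγ0 hγ1 n hqγn t ht.1 ht.2
  rw [Real.dist_eq, abs_sub_comm]
  refine lt_of_le_of_lt hbd ?_
  rw [div_lt_iff₀ hn0]
  have : 7*(q:ℝ)^2/ε * ε < n * ε := by
    exact mul_lt_mul_of_pos_right hcn hε
  rw [div_mul_cancel₀ _ hε.ne'] at this
  linarith
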